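/- Let H be a finite simple graph with minimum degree at least 2 in which every maximal path whose internal vertices and endpoints all have degree exactly 2 has at most 7 vertices, and in which no connected component is a cycle all of whose vertices have degree 2. Let X be a feedback vertex set of H and let Y = V(H) \ X. Then |Y| ≤ 16·|E(X,Y)|, where E(X,Y) is the set of edges with one endpoint in X and the other in Y. -/

import Mathlib

open Finset SimpleGraph

set_option linter.unusedSectionVars false
set_option maxHeartbeats 1000000

namespace StmtAux

variable {V : Type*} [Fintype V] [DecidableEq V]

lemma exists_boundary {G : SimpleGraph V} {S : Set V} :
    ∀ {a b : V} (_q : G.Walk a b), a ∈ S → b ∉ S →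
      ∃ w' w, G.Adj w' w ∧ w' ∈ S ∧ w ∉ S := by
  intro a b q
  induction q with
  | nil => intro h h2; exact absurd h h2
  | @cons a c b h q ih =>
    intro ha hb
    by_cases hm : c ∈ S
    · exact ih hm hb
    · exact ⟨a, c, h, ha, hm⟩

lemma closed_walk {G : SimpleGraph V} [DecidableRel G.Adj] {C : Finset V}
    (hcl : ∀ a ∈ C, G.neighborFinset a ⊆ C) :
    ∀ {a b : V} (_q : G.Walk a b), a ∈ C → b ∈ C := by
  intro a b q
  induction q with
  | nil => exact id
  | @cons a c b h q ih =>
    intro ha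
    exact ih (hcl a ha (by rwa [SimpleGraph.mem_neighborFinset]))

def liftWalk {G : SimpleGraph V} {s : Set V} :
    ∀ {u v : V} (p : G.Walk u v) (hp : ∀ x ∈ p.support, x ∈ s),
      (G.induce s).Walk ⟨u, hp u p.start_mem_support⟩ ⟨v, hp v p.end_mem_support⟩
  | _, _, SimpleGraph.Walk.nil, _ => SimpleGraph.Walk.nil
  | _, _, SimpleGraph.Walk.cons h q, hp =>
      SimpleGraph.Walk.cons (by exact h) (liftWalk q (fun x hx => hp x (by simp [hx])))

lemma liftWalk_map {G : SimpleGraph V} {s : Set V} :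
    ∀ {u v : V} (p : G.Walk u v) (hp : ∀ x ∈ p.support, x ∈ s),
      (liftWalk p hp).map (SimpleGraph.Embedding.induce s).toHom = p
  | _, _, SimpleGraph.Walk.nil, _ => rfl
  | _, _, SimpleGraph.Walk.cons h q, hp => by
      simp only [liftWalk]
      exact (SimpleGraph.Walk.map_cons ..).trans
        (congrArg (SimpleGraph.Walk.cons _) (liftWalk_map q _))

lemma cycle_not_subset {G : SimpleGraph V} {s : Set V} (hA : (G.induce s).IsAcyclic)
    {u : V} (c : G.Walk u u) (hc : c.IsCycle) : ¬ ∀ x ∈ c.support, x ∈ s := by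
  intro hsub
  have hinj : Function.Injective (SimpleGraph.Embedding.induce (G := G) s).toHom := by
    intro x y hxy
    exact Subtype.val_injective hxy
  have : ((liftWalk c hsub).map (SimpleGraph.Embedding.induce s).toHom).IsCycle := by
    rw [liftWalk_map c hsub]; exact hc
  exact hA _ ((SimpleGraph.Walk.map_isCycle_iff_of_injective hinj).mp this)

lemma exists_maxpath (G : SimpleGraph V) {K : Finset V} (hK : K.Nonempty) :
    ∃ (u v : V) (p : G.Walk u v), p.IsPath ∧ (∀ x ∈ p.support, x ∈ K) ∧
      ∀ (a b : V) (q : G.Walk a b), q.IsPath → (∀ x ∈ q.support, x ∈ K) →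
        q.length ≤ p.length := by
  classical
  obtain ⟨a0, ha0⟩ := hK
  set P : ℕ → Prop := fun n => ∃ (u v : V) (p : G.Walk u v), p.IsPath ∧
    (∀ x ∈ p.support, x ∈ K) ∧ p.length = n with hP
  have h0 : P 0 := ⟨a0, a0, SimpleGraph.Walk.nil, by simp, by simpa using ha0, rfl⟩
  have hspec : P (Nat.findGreatest P (Fintype.card V)) :=
    Nat.findGreatest_spec (Nat.zero_le _) h0
  obtain ⟨u, v, p, h1, h2, h3⟩ := hspec
  refine ⟨u, v, p, h1, h2, fun a b q hq hqK => ?_⟩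
  by_contra hlt
  push_neg at hlt
  have hnot : ¬ P q.length :=
    Nat.findGreatest_is_greatest (h3 ▸ hlt) (Nat.le_of_lt_succ (Nat.lt_succ_of_lt hq.length_lt))
  exact hnot ⟨a, b, q, hq, hqK, rfl⟩

lemma exists_cycle_of_min_degree {G : SimpleGraph V} [DecidableRel G.Adj] {A : Finset V}
    (hne : A.Nonempty) (h2 : ∀ y ∈ A, 2 ≤ #(G.neighborFinset y ∩ A)) :
    ∃ (u : V) (c : G.Walk u u), c.IsCycle ∧ ∀ x ∈ c.support, x ∈ A := by
  classical
  obtain ⟨u, v, p, hp, hpA, hmax⟩ := exists_maxpath G hne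
  -- all neighbors of u inside A are in p.support
  have hnbr : ∀ w ∈ G.neighborFinset u ∩ A, w ∈ p.support := by
    intro w hw
    rw [mem_inter, SimpleGraph.mem_neighborFinset] at hw
    by_contra hws
    have hq : (SimpleGraph.Walk.cons hw.1.symm p).IsPath := hp.cons hws
    have := hmax _ _ _ hq (by
      intro x hx
      rw [SimpleGraph.Walk.support_cons] at hx
      rcases List.mem_cons.mp hx with h | h
      · exact h ▸ hw.2
      · exact hpA x h)
    simp [SimpleGraph.Walk.length_cons] at this
  -- p is not nil
  have hu : u ∈ A := hpA u p.start_mem_support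
  cases p with
  | nil =>
      exfalso
      have hsub : G.neighborFinset u ∩ A ⊆ {u} := by
        intro w hw
        have := hnbr w hw
        simpa [SimpleGraph.Walk.support_nil] using this
      have hle := card_le_card hsub
      rw [card_singleton] at hle
      have := h2 u hu
      omega
  | @cons _ bb _ h q =>
      -- second vertex is bb
      have hbb : bb ∈ G.neighborFinset u ∩ A := by
        rw [mem_inter, SimpleGraph.mem_neighborFinset]
        exact ⟨h, hpA bb (by simp [SimpleGraph.Walk.support_cons])⟩
      -- there is another neighbor w ≠ bb in support
      have hcard : 2 ≤ #(G.neighborFinset u ∩ A) := h2 u hu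
      obtain ⟨w, hwmem, hwne⟩ : ∃ w ∈ G.neighborFinset u ∩ A, w ≠ bb := by
        by_contra hcon
        push_neg at hcon
        have hsub : G.neighborFinset u ∩ A ⊆ {bb} := fun x hx => by
          simp [hcon x hx]
        have hle := card_le_card hsub
        rw [card_singleton] at hle
        omega
      have hwadj : G.Adj u w := by
        rw [mem_inter, SimpleGraph.mem_neighborFinset] at hwmem
        exact hwmem.1
      have hwsupp : w ∈ (SimpleGraph.Walk.cons h q).support := hnbr w hwmem
      have hwA : w ∈ A := by
        rw [mem_inter] at hwmem; exact hwmem.2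
      have hwu : w ≠ u := fun he => G.irrefl (he ▸ hwadj)
      -- w in q.support
      have hwq : w ∈ q.support := by
        rcases List.mem_cons.mp (by simpa [SimpleGraph.Walk.support_cons] using hwsupp) with h' | h'
        · exact absurd h' hwu
        · exact h'
      have hqpath : q.IsPath ∧ u ∉ q.support := (SimpleGraph.Walk.cons_isPath_iff h q).mp hp
      set r := q.takeUntil w hwq with hr
      have hrpath : r.IsPath := hqpath.1.takeUntil hwq
      have hur : u ∉ r.support := fun hc => hqpath.2 (q.support_takeUntil_subset hwq hc)
      -- path u -> w  : cons h r
      have hpathuw : (SimpleGraph.Walk.cons h r).IsPath := hrpath.cons hur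
      -- cycle : cons (w adj u) (cons h r)
      refine ⟨w, SimpleGraph.Walk.cons hwadj.symm (SimpleGraph.Walk.cons h r), ?_, ?_⟩
      · rw [SimpleGraph.Walk.cons_isCycle_iff]
        refine ⟨hpathuw, ?_⟩
        intro hedge
        rw [SimpleGraph.Walk.edges_cons] at hedge
        rcases List.mem_cons.mp hedge with h' | h'
        · rw [Sym2.eq_iff] at h'
          rcases h' with ⟨h1, _⟩ | ⟨h1, _⟩
          · exact hwu h1
          · exact hwne h1
        · exact hur (r.snd_mem_support_of_mem_edges h')
      · intro x hx
        rw [SimpleGraph.Walk.support_cons, SimpleGraph.Walk.support_cons] at hx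
        rcases List.mem_cons.mp hx with h' | h'
        · exact h' ▸ hwA
        · rcases List.mem_cons.mp h' with h'' | h''
          · exact h'' ▸ hu
          · exact hpA x (by
              rw [SimpleGraph.Walk.support_cons]
              exact List.mem_cons_of_mem _ (q.support_takeUntil_subset hwq h''))

lemma sum_card_nbr_le {G : SimpleGraph V} [DecidableRel G.Adj] (A : Finset V)
    (hA : ∀ (u : V) (c : G.Walk u u), c.IsCycle → ¬ ∀ x ∈ c.support, x ∈ A) :
    ∑ y ∈ A, #(G.neighborFinset y ∩ A) ≤ 2 * #A := by
  classical
  induction A using Finset.strongInduction with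
  | _ A ih =>
  rcases A.eq_empty_or_nonempty with rfl | hne
  · simp
  have hlow : ¬ ∀ y ∈ A, 2 ≤ #(G.neighborFinset y ∩ A) := by
    intro hall
    obtain ⟨u, c, hc, hsub⟩ := exists_cycle_of_min_degree hne hall
    exact hA u c hc hsub
  push_neg at hlow
  obtain ⟨y, hy, hylt⟩ := hlow
  have hy1 : #(G.neighborFinset y ∩ A) ≤ 1 := by omega
  set A' := A.erase y with hA'def
  have hyA : A = insert y A' := (Finset.insert_erase hy).symm
  have hynA' : y ∉ A' := Finset.notMem_erase y A
  have hss : A' ⊂ A := Finset.erase_ssubset hy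
  have hrec : ∑ z ∈ A', #(G.neighborFinset z ∩ A') ≤ 2 * #A' :=
    ih A' hss (fun u c hc hsub => hA u c hc
      (fun x hx => Finset.erase_subset y A (hsub x hx)))
  have key : ∀ z, #(G.neighborFinset z ∩ A) ≤
      #(G.neighborFinset z ∩ A') + (if y ∈ G.neighborFinset z then 1 else 0) := by
    intro z
    by_cases hz : y ∈ G.neighborFinset z
    · rw [if_pos hz]
      have hsub2 : G.neighborFinset z ∩ A ⊆ insert y (G.neighborFinset z ∩ A') := by
        intro x hx
        rw [mem_inter] at hx
        rcases Finset.mem_insert.mp (hyA ▸ hx.2) with rfl | hxA'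
        · exact Finset.mem_insert_self _ _
        · exact Finset.mem_insert_of_mem (mem_inter.mpr ⟨hx.1, hxA'⟩)
      exact (card_le_card hsub2).trans (card_insert_le _ _)
    · rw [if_neg hz, add_zero]
      apply card_le_card
      intro x hx
      rw [mem_inter] at hx ⊢
      refine ⟨hx.1, ?_⟩
      rcases Finset.mem_insert.mp (hyA ▸ hx.2) with rfl | hxA'
      · exact absurd hx.1 hz
      · exact hxA'
  have h2sum : ∑ z ∈ A', (if y ∈ G.neighborFinset z then 1 else 0) ≤ 1 := by
    rw [← Finset.card_filter]
    refine le_trans (card_le_card ?_) hy1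
    intro z hz
    rw [Finset.mem_filter] at hz
    rw [mem_inter, SimpleGraph.mem_neighborFinset]
    rw [SimpleGraph.mem_neighborFinset] at hz
    exact ⟨hz.2.symm, Finset.erase_subset y A hz.1⟩
  have hcard : #A = #A' + 1 := by
    rw [hyA, card_insert_of_notMem hynA']
  calc ∑ z ∈ A, #(G.neighborFinset z ∩ A)
      = #(G.neighborFinset y ∩ A) + ∑ z ∈ A', #(G.neighborFinset z ∩ A) := by
        rw [hyA, Finset.sum_insert hynA']
    _ ≤ 1 + (∑ z ∈ A', #(G.neighborFinset z ∩ A') +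
        ∑ z ∈ A', (if y ∈ G.neighborFinset z then 1 else 0)) := by
        refine add_le_add hy1 ?_
        rw [← Finset.sum_add_distrib]
        exact Finset.sum_le_sum fun z _ => key z
    _ ≤ 1 + (2 * #A' + 1) := add_le_add_right (add_le_add hrec h2sum) 1
    _ ≤ 2 * #A := by omega

lemma getVert_one_mem_support {G : SimpleGraph V} {u v : V} (p : G.Walk u v) (h : ¬ p.Nil) :
    p.getVert 1 ∈ p.support := by
  rw [SimpleGraph.Walk.mem_support_iff_exists_getVert]
  exact ⟨1, rfl, by rw [SimpleGraph.Walk.not_nil_iff_lt_length] at h; omega⟩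

lemma cover {G : SimpleGraph V} [DecidableRel G.Adj] {K : Finset V} {y0 : V} (hy0 : y0 ∈ K)
    (hdeg : ∀ z ∈ K, #(G.neighborFinset z) ≤ 2)
    (hcl : ∀ z ∈ K, G.neighborFinset z ⊆ K)
    (hconn : ∀ z ∈ K, G.Reachable y0 z) :
    ∃ (u v : V) (p : G.Walk u v), p.IsPath ∧ (∀ x ∈ p.support, x ∈ K) ∧
      ∀ z ∈ K, z ∈ p.support := by
  classical
  obtain ⟨u, v, p, hp, hpK, hmax⟩ := exists_maxpath G ⟨y0, hy0⟩
  refine ⟨u, v, p, hp, hpK, ?_⟩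
  by_contra hcon
  push_neg at hcon
  obtain ⟨z', hz'K, hz's⟩ := hcon
  have huK : u ∈ K := hpK u p.start_mem_support
  obtain ⟨q⟩ : G.Reachable u z' := (hconn u huK).symm.trans (hconn z' hz'K)
  obtain ⟨w', w, hadj, hw's, hws⟩ :=
    exists_boundary (S := {x | x ∈ p.support}) q p.start_mem_support hz's
  have hw's : w' ∈ p.support := hw's
  have hws : w ∉ p.support := hws
  have hw'K : w' ∈ K := hpK w' hw's
  have hwK : w ∈ K := hcl w' hw'K (by rwa [SimpleGraph.mem_neighborFinset])
  by_cases hwv : w' = v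
  · subst hwv
    -- extend at the v end
    have hq2 : (SimpleGraph.Walk.cons hadj.symm p.reverse).IsPath := by
      refine hp.reverse.cons ?_
      rwa [SimpleGraph.Walk.support_reverse, List.mem_reverse]
    have hle := hmax _ _ _ hq2 (by
      intro x hx
      rw [SimpleGraph.Walk.support_cons] at hx
      rcases List.mem_cons.mp hx with rfl | hx
      · exact hwK
      · exact hpK x (by rwa [SimpleGraph.Walk.support_reverse, List.mem_reverse] at hx))
    simp [SimpleGraph.Walk.length_cons, SimpleGraph.Walk.length_reverse] at hle
  by_cases hwu : w' = u
  · subst hwu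
    have hq2 : (SimpleGraph.Walk.cons hadj.symm p).IsPath := hp.cons hws
    have hle := hmax _ _ _ hq2 (by
      intro x hx
      rw [SimpleGraph.Walk.support_cons] at hx
      rcases List.mem_cons.mp hx with rfl | hx
      · exact hwK
      · exact hpK x hx)
    simp [SimpleGraph.Walk.length_cons] at hle
  -- internal case
  · set t := p.takeUntil w' hw's with ht
    set d := p.dropUntil w' hw's with hd
    have htnil : ¬ t.Nil := SimpleGraph.Walk.not_nil_of_ne (Ne.symm hwu)
    have hdnil : ¬ d.Nil := SimpleGraph.Walk.not_nil_of_ne hwv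
    have htrnil : ¬ t.reverse.Nil := by
      rw [SimpleGraph.Walk.not_nil_iff_lt_length, SimpleGraph.Walk.length_reverse]
      rwa [SimpleGraph.Walk.not_nil_iff_lt_length] at htnil
    set a := t.reverse.getVert 1 with ha
    set b := d.getVert 1 with hb
    have hadja : G.Adj w' a := t.reverse.adj_snd htrnil
    have hadjb : G.Adj w' b := d.adj_snd hdnil
    have hat : a ∈ t.support := by
      have := getVert_one_mem_support t.reverse htrnil
      rwa [SimpleGraph.Walk.support_reverse, List.mem_reverse] at this
    have hbd : b ∈ d.support := getVert_one_mem_support d hdnil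
    have hsupp_eq : p.support = t.support ++ d.support.tail := by
      conv_lhs => rw [← p.take_spec hw's]
      rw [SimpleGraph.Walk.support_append]
    have hnodup : (t.support ++ d.support.tail).Nodup := by
      rw [← hsupp_eq]; exact hp.support_nodup
    have hbtail : b ∈ d.support.tail := by
      have := d.support_eq_cons
      rw [this] at hbd
      rcases List.mem_cons.mp hbd with h' | h'
      · exact absurd h'.symm hadjb.ne
      · exact h'
    have hab : a ≠ b := by
      intro h
      exact (List.disjoint_of_nodup_append hnodup) hat (h ▸ hbtail)
    have hwa : w ≠ a := by
      intro h
      exact hws (h ▸ (p.support_takeUntil_subset hw's hat))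
    have hwb : w ≠ b := by
      intro h
      apply hws
      rw [hsupp_eq]
      exact List.mem_append_right _ (h ▸ hbtail)
    have hsub3 : {a, b, w} ⊆ G.neighborFinset w' := by
      intro x hx
      rw [SimpleGraph.mem_neighborFinset]
      rcases Finset.mem_insert.mp hx with rfl | hx
      · exact hadja
      · rcases Finset.mem_insert.mp hx with rfl | hx
        · exact hadjb
        · rw [Finset.mem_singleton] at hx
          exact hx ▸ hadj
    have hc3 : #({a, b, w} : Finset V) = 3 := by
      rw [card_insert_of_notMem (by simp [hab, hwa.symm]),
        card_insert_of_notMem (by simp [hwb.symm]), card_singleton]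
    have := (card_le_card hsub3)
    rw [hc3] at this
    have := hdeg w' hw'K
    omega

lemma extend_max {G : SimpleGraph V} [DecidableRel G.Adj] :
    ∀ (n : ℕ) {u v : V} (p : G.Walk u v), p.IsPath →
      (∀ x ∈ p.support, G.degree x = 2) →
      Fintype.card V - p.support.length ≤ n →
      ∃ (u' v' : V) (q : G.Walk u' v'), q.IsPath ∧
        (∀ x ∈ q.support, G.degree x = 2) ∧ (∀ x ∈ p.support, x ∈ q.support) ∧
        (¬ ∃ w, G.Adj w u' ∧ w ∉ q.support ∧ G.degree w = 2) ∧
        (¬ ∃ w, G.Adj v' w ∧ w ∉ q.support ∧ G.degree w = 2) := by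
  intro n
  induction n with
  | zero =>
    intro u v p hp hdeg hn
    have hlen : Fintype.card V ≤ p.support.length := by omega
    have hnoext : ∀ w : V, w ∈ p.support := by
      intro w
      by_contra hw
      have h1 : (w :: p.support).Nodup := List.nodup_cons.mpr ⟨hw, hp.support_nodup⟩
      have := h1.length_le_card
      simp [SimpleGraph.Walk.length_support] at this
      rw [SimpleGraph.Walk.length_support] at hlen
      omega
    refine ⟨u, v, p, hp, hdeg, fun x hx => hx, ?_, ?_⟩
    · rintro ⟨w, _, hw, _⟩; exact hw (hnoext w)
    · rintro ⟨w, _, hw, _⟩; exact hw (hnoext w)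
  | succ n ih =>
    intro u v p hp hdeg hn
    by_cases h1 : ∃ w, G.Adj w u ∧ w ∉ p.support ∧ G.degree w = 2
    · obtain ⟨w, hadj, hws, hwdeg⟩ := h1
      have hp2 : (SimpleGraph.Walk.cons hadj p).IsPath := hp.cons hws
      have hdeg2 : ∀ x ∈ (SimpleGraph.Walk.cons hadj p).support, G.degree x = 2 := by
        intro x hx
        rcases List.mem_cons.mp (by simpa [SimpleGraph.Walk.support_cons] using hx) with rfl | hx
        · exact hwdeg
        · exact hdeg x hx
      obtain ⟨u', v', q, h₁, h₂, h₃, h₄, h₅⟩ := ih (SimpleGraph.Walk.cons hadj p) hp2 hdeg2 (by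
        rw [SimpleGraph.Walk.support_cons, List.length_cons]; omega)
      exact ⟨u', v', q, h₁, h₂,
        fun x hx => h₃ x (by rw [SimpleGraph.Walk.support_cons]; exact List.mem_cons_of_mem _ hx),
        h₄, h₅⟩
    · by_cases h2 : ∃ w, G.Adj v w ∧ w ∉ p.support ∧ G.degree w = 2
      · obtain ⟨w, hadj, hws, hwdeg⟩ := h2
        have hws' : w ∉ p.reverse.support := by
          rwa [SimpleGraph.Walk.support_reverse, List.mem_reverse]
        have hp2 : (SimpleGraph.Walk.cons hadj.symm p.reverse).IsPath := hp.reverse.cons hws'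
        have hdeg2 : ∀ x ∈ (SimpleGraph.Walk.cons hadj.symm p.reverse).support,
            G.degree x = 2 := by
          intro x hx
          rcases List.mem_cons.mp (by simpa [SimpleGraph.Walk.support_cons] using hx) with rfl | hx
          · exact hwdeg
          · exact hdeg x hx
        obtain ⟨u', v', q, h₁, h₂, h₃, h₄, h₅⟩ :=
          ih (SimpleGraph.Walk.cons hadj.symm p.reverse) hp2 hdeg2 (by
            rw [SimpleGraph.Walk.support_cons, List.length_cons,
              SimpleGraph.Walk.support_reverse, List.length_reverse]; omega)
        refine ⟨u', v', q, h₁, h₂, fun x hx => h₃ x ?_, h₄, h₅⟩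
        rw [SimpleGraph.Walk.support_cons]
        refine List.mem_cons_of_mem _ ?_
        rwa [SimpleGraph.Walk.support_reverse, List.mem_reverse]
      · exact ⟨u, v, p, hp, hdeg, fun x hx => hx, h1, h2⟩

def restrict (G : SimpleGraph V) (K : Finset V) : SimpleGraph V where
  Adj a b := G.Adj a b ∧ a ∈ K ∧ b ∈ K
  symm := ⟨fun _ _ ⟨h, ha, hb⟩ => ⟨h.symm, hb, ha⟩⟩
  loopless := ⟨fun _ ⟨h, _, _⟩ => G.irrefl h⟩

instance {G : SimpleGraph V} [DecidableRel G.Adj] {K : Finset V} :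
    DecidableRel (restrict G K).Adj :=
  fun a b => inferInstanceAs (Decidable (G.Adj a b ∧ a ∈ K ∧ b ∈ K))

lemma restrict_le {G : SimpleGraph V} {K : Finset V} : restrict G K ≤ G := fun _ _ h => h.1

lemma restrict_nbr {G : SimpleGraph V} [DecidableRel G.Adj] {K : Finset V} {z : V} (hz : z ∈ K) :
    (restrict G K).neighborFinset z = G.neighborFinset z ∩ K := by
  ext w
  rw [mem_inter, SimpleGraph.mem_neighborFinset, SimpleGraph.mem_neighborFinset]
  constructor
  · rintro ⟨h, _, hw⟩; exact ⟨h, hw⟩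
  · rintro ⟨h, hw⟩; exact ⟨h, hz, hw⟩

lemma restrict_nbr_empty {G : SimpleGraph V} [DecidableRel G.Adj] {K : Finset V} {z : V}
    (hz : z ∉ K) : (restrict G K).neighborFinset z = ∅ := by
  ext w
  rw [SimpleGraph.mem_neighborFinset]
  simp only [Finset.notMem_empty, iff_false]
  rintro ⟨_, hz', _⟩
  exact hz hz'

lemma even_sum_nbr (G : SimpleGraph V) [DecidableRel G.Adj] (K : Finset V) :
    Even (∑ z ∈ K, #(G.neighborFinset z ∩ K)) := by
  have h := SimpleGraph.sum_degrees_eq_twice_card_edges (restrict G K)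
  have heq : ∑ z ∈ K, #(G.neighborFinset z ∩ K) = ∑ v, (restrict G K).degree v := by
    have h1 : ∑ z ∈ K, #(G.neighborFinset z ∩ K) = ∑ z ∈ K, (restrict G K).degree z :=
      Finset.sum_congr rfl fun z hz => by
        simp only [SimpleGraph.degree, restrict_nbr hz]
    rw [h1]
    refine Finset.sum_subset (subset_univ K) fun x _ hx => ?_
    simp only [SimpleGraph.degree, restrict_nbr_empty hx, card_empty]
  rw [heq, h]
  exact ⟨_, two_mul _⟩

lemma comp_bound (G : SimpleGraph V) [DecidableRel G.Adj]
    (hpath : ∀ (u v : V) (p : G.Walk u v), p.IsPath →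
      (∀ x ∈ p.support, G.degree x = 2) →
      (¬ ∃ w : V, G.Adj w u ∧ w ∉ p.support ∧ G.degree w = 2) →
      (¬ ∃ w : V, G.Adj v w ∧ w ∉ p.support ∧ G.degree w = 2) →
      p.support.length ≤ 7)
    (hnocyc : ∀ v : V, ∃ u : V, G.Reachable v u ∧ G.degree u ≠ 2)
    (D T : Finset V) (hDT : ∀ y ∈ D, y ∉ T)
    (hD2 : ∀ y ∈ D, G.degree y = 2)
    (hDcl : ∀ y ∈ D, G.neighborFinset y ⊆ D ∪ T) :
    2 * #D ≤ 7 * ∑ y ∈ D, #(G.neighborFinset y ∩ T) := by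
  classical
  suffices h : ∀ A : Finset V, A ⊆ D → (∀ y ∈ A, G.neighborFinset y ∩ D ⊆ A) →
      2 * #A ≤ 7 * ∑ y ∈ A, #(G.neighborFinset y ∩ T) by
    exact h D Finset.Subset.rfl (fun y _ => inter_subset_right)
  intro A
  induction A using Finset.strongInduction with
  | _ A ih =>
  intro hAD hAcl
  rcases A.eq_empty_or_nonempty with rfl | ⟨y0, hy0⟩
  · simp
  set K := A.filter (fun z => (restrict G D).Reachable y0 z) with hKdef
  have hy0K : y0 ∈ K := by
    rw [hKdef, Finset.mem_filter]
    exact ⟨hy0, SimpleGraph.Reachable.refl y0⟩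
  have hKA : K ⊆ A := Finset.filter_subset _ _
  have hKD : K ⊆ D := hKA.trans hAD
  have hKcl : ∀ z ∈ K, G.neighborFinset z ∩ D ⊆ K := by
    intro z hz w hw
    have hzA : z ∈ A := hKA hz
    have hwA : w ∈ A := hAcl z hzA hw
    rw [mem_inter, SimpleGraph.mem_neighborFinset] at hw
    rw [hKdef, Finset.mem_filter]
    refine ⟨hwA, ?_⟩
    have hreach : (restrict G D).Reachable y0 z := (Finset.mem_filter.mp hz).2
    exact hreach.trans (SimpleGraph.Adj.reachable ⟨hw.1, hAD hzA, hw.2⟩)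
  -- K is ≤ 7
  have hKnbr : ∀ z ∈ K, (restrict G D).neighborFinset z = G.neighborFinset z ∩ D :=
    fun z hz => restrict_nbr (hKD hz)
  have hK7 : #K ≤ 7 := by
    obtain ⟨u, v, p, hp, hpK, hKp⟩ := cover (G := restrict G D) hy0K
      (fun z hz => by
        rw [hKnbr z hz]
        calc #(G.neighborFinset z ∩ D) ≤ #(G.neighborFinset z) := card_le_card inter_subset_left
        _ = 2 := hD2 z (hKD hz))
      (fun z hz => by rw [hKnbr z hz]; exact hKcl z hz)
      (fun z hz => (Finset.mem_filter.mp hz).2)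
    set p' := p.mapLe (restrict_le (G := G) (K := D)) with hp'def
    have hp'path : p'.IsPath := hp.mapLe _
    have hp'supp : p'.support = p.support := by
      rw [hp'def, SimpleGraph.Walk.support_map]
      have : ⇑(SimpleGraph.Hom.ofLE (restrict_le (G := G) (K := D))) = id := rfl
      rw [this, List.map_id]
    have hp'deg : ∀ x ∈ p'.support, G.degree x = 2 := by
      intro x hx
      rw [hp'supp] at hx
      exact hD2 x (hKD (hpK x hx))
    obtain ⟨u', v', q, hq, hqdeg, hqsub, hqu, hqv⟩ :=
      extend_max (Fintype.card V) p' hp'path hp'deg (Nat.sub_le _ _)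
    have hq7 := hpath u' v' q hq hqdeg hqu hqv
    have hKq : K ⊆ q.support.toFinset := by
      intro z hz
      rw [List.mem_toFinset]
      exact hqsub z (by rw [hp'supp]; exact hKp z hz)
    calc #K ≤ q.support.toFinset.card := card_le_card hKq
      _ ≤ q.support.length := q.support.toFinset_card_le
      _ ≤ 7 := hq7
  -- a vertex of K with ≤ 1 neighbors in K
  have hlow : ∃ z0 ∈ K, #(G.neighborFinset z0 ∩ K) ≤ 1 := by
    by_contra hcon
    push_neg at hcon
    have hclosed : ∀ z ∈ K, G.neighborFinset z ⊆ K := by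
      intro z hz
      have h2 : 2 ≤ #(G.neighborFinset z ∩ K) := hcon z hz
      have hdeg : #(G.neighborFinset z) = 2 := hD2 z (hKD hz)
      have : G.neighborFinset z ∩ K = G.neighborFinset z :=
        Finset.eq_of_subset_of_card_le inter_subset_left (by omega)
      rw [← this]
      exact inter_subset_right
    obtain ⟨u, hreach, hdeg⟩ := hnocyc y0
    obtain ⟨q⟩ := hreach
    exact hdeg (hD2 u (hKD (closed_walk hclosed q hy0K)))
  obtain ⟨z0, hz0K, hz0⟩ := hlow
  -- sum of in-K neighbor counts ≤ 2#K - 2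
  have hsumK : ∑ z ∈ K, #(G.neighborFinset z ∩ K) + 2 ≤ 2 * #K := by
    have hbound : ∀ z ∈ K.erase z0, #(G.neighborFinset z ∩ K) ≤ 2 := by
      intro z hz
      calc #(G.neighborFinset z ∩ K) ≤ #(G.neighborFinset z) := card_le_card inter_subset_left
        _ = 2 := hD2 z (hKD (Finset.erase_subset _ _ hz))
    have hsplit : ∑ z ∈ K, #(G.neighborFinset z ∩ K) =
        #(G.neighborFinset z0 ∩ K) + ∑ z ∈ K.erase z0, #(G.neighborFinset z ∩ K) :=
      (Finset.add_sum_erase K _ hz0K).symm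
    have hsum_le : ∑ z ∈ K.erase z0, #(G.neighborFinset z ∩ K) ≤ 2 * #(K.erase z0) := by
      calc ∑ z ∈ K.erase z0, #(G.neighborFinset z ∩ K) ≤ ∑ _z ∈ K.erase z0, 2 :=
        Finset.sum_le_sum hbound
        _ = 2 * #(K.erase z0) := by rw [Finset.sum_const, smul_eq_mul, mul_comm]
    have hcard_erase : #(K.erase z0) = #K - 1 := Finset.card_erase_of_mem hz0K
    have hKpos : 1 ≤ #K := Finset.card_pos.mpr ⟨z0, hz0K⟩
    obtain ⟨m, hm⟩ := even_sum_nbr G K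
    omega
  -- attach count
  have hattach : 2 * #K ≤ 7 * ∑ z ∈ K, #(G.neighborFinset z ∩ T) := by
    have hdecomp : ∀ z ∈ K, #(G.neighborFinset z ∩ K) + #(G.neighborFinset z ∩ T) = 2 := by
      intro z hz
      have hdisj : Disjoint (G.neighborFinset z ∩ K) (G.neighborFinset z ∩ T) := by
        rw [Finset.disjoint_left]
        intro x hx1 hx2
        rw [mem_inter] at hx1 hx2
        exact hDT x (hKD hx1.2) hx2.2
      have hunion : (G.neighborFinset z ∩ K) ∪ (G.neighborFinset z ∩ T) =
          G.neighborFinset z := by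
        apply Finset.Subset.antisymm
        · exact Finset.union_subset inter_subset_left inter_subset_left
        · intro w hw
          have hwDT := hDcl z (hKD hz) hw
          rcases Finset.mem_union.mp hwDT with hwD | hwT
          · have hwK : w ∈ K := hKcl z hz (mem_inter.mpr ⟨hw, hwD⟩)
            exact Finset.mem_union_left _ (mem_inter.mpr ⟨hw, hwK⟩)
          · exact Finset.mem_union_right _ (mem_inter.mpr ⟨hw, hwT⟩)
      have hcard := Finset.card_union_of_disjoint hdisj
      rw [hunion] at hcard
      have hdz : #(G.neighborFinset z) = 2 := hD2 z (hKD hz)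
      omega
    have hsum2 : ∑ z ∈ K, #(G.neighborFinset z ∩ K) + ∑ z ∈ K, #(G.neighborFinset z ∩ T) =
        2 * #K := by
      rw [← Finset.sum_add_distrib, Finset.sum_congr rfl hdecomp, Finset.sum_const,
        smul_eq_mul, mul_comm]
    have h2 : 2 ≤ ∑ z ∈ K, #(G.neighborFinset z ∩ T) := by omega
    calc 2 * #K ≤ 2 * 7 := by omega
      _ ≤ 7 * ∑ z ∈ K, #(G.neighborFinset z ∩ T) := by omega
  -- recursion on A \ K
  have hssub : A \ K ⊂ A := by
    refine Finset.ssubset_iff_of_subset (Finset.sdiff_subset) |>.mpr ?_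
    exact ⟨y0, hy0, by simp [hy0K]⟩
  have hrec : 2 * #(A \ K) ≤ 7 * ∑ y ∈ A \ K, #(G.neighborFinset y ∩ T) := by
    refine ih (A \ K) hssub ((Finset.sdiff_subset).trans hAD) ?_
    intro z hz w hw
    have hzA : z ∈ A := (Finset.sdiff_subset) hz
    have hwA : w ∈ A := hAcl z hzA hw
    rw [Finset.mem_sdiff]
    refine ⟨hwA, fun hwK => ?_⟩
    have hzK : z ∈ K := by
      rw [mem_inter, SimpleGraph.mem_neighborFinset] at hw
      rw [hKdef, Finset.mem_filter]
      refine ⟨hzA, ?_⟩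
      have hreach : (restrict G D).Reachable y0 w := (Finset.mem_filter.mp hwK).2
      exact hreach.trans (SimpleGraph.Adj.reachable ⟨hw.1.symm, hw.2, hAD hzA⟩)
    exact (Finset.mem_sdiff.mp hz).2 hzK
  have hcardsplit : #A = #(A \ K) + #K := by
    rw [Finset.card_sdiff_of_subset hKA]
    have := Finset.card_le_card hKA
    omega
  have hsumsplit : ∑ y ∈ A, #(G.neighborFinset y ∩ T) =
      ∑ y ∈ A \ K, #(G.neighborFinset y ∩ T) + ∑ y ∈ K, #(G.neighborFinset y ∩ T) :=
    (Finset.sum_sdiff hKA).symm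
  rw [hcardsplit, hsumsplit]
  omega

lemma sum_nbr_eq_card (G : SimpleGraph V) [DecidableRel G.Adj] (A B : Finset V) :
    ∑ a ∈ A, #(G.neighborFinset a ∩ B) = #((A ×ˢ B).filter fun p => G.Adj p.1 p.2) := by
  classical
  rw [Finset.card_eq_sum_card_fiberwise (f := Prod.fst) (t := A) (by
    intro p hp
    rw [Finset.mem_coe, Finset.mem_filter, Finset.mem_product] at hp
    exact hp.1.1)]
  refine Finset.sum_congr rfl fun a ha => ?_
  refine Finset.card_bij' (fun b _ => (a, b)) (fun p _ => p.2) ?_ ?_ ?_ ?_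
  · intro b hb
    rw [mem_inter, SimpleGraph.mem_neighborFinset] at hb
    simp only [Finset.mem_filter, Finset.mem_product]
    exact ⟨⟨⟨ha, hb.2⟩, hb.1⟩, trivial⟩
  · intro p hp
    simp only [Finset.mem_filter, Finset.mem_product] at hp
    rw [mem_inter, SimpleGraph.mem_neighborFinset]
    obtain ⟨⟨⟨hp1, hp2⟩, hadj⟩, hfst⟩ := hp
    exact ⟨hfst ▸ hadj, hp2⟩
  · intro b _; rfl
  · intro p hp
    simp only [Finset.mem_filter, Finset.mem_product] at hp
    exact Prod.ext hp.2.symm rfl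

lemma card_pairs_symm (G : SimpleGraph V) [DecidableRel G.Adj] (A B : Finset V) :
    #((A ×ˢ B).filter fun p => G.Adj p.1 p.2) =
    #((B ×ˢ A).filter fun p => G.Adj p.1 p.2) := by
  refine Finset.card_bij' (fun p _ => (p.2, p.1)) (fun p _ => (p.2, p.1)) ?_ ?_ ?_ ?_
  · intro p hp
    simp only [Finset.mem_filter, Finset.mem_product] at hp ⊢
    exact ⟨⟨hp.1.2, hp.1.1⟩, hp.2.symm⟩
  · intro p hp
    simp only [Finset.mem_filter, Finset.mem_product] at hp ⊢
    exact ⟨⟨hp.1.2, hp.1.1⟩, hp.2.symm⟩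
  · intro p _; rfl
  · intro p _; rfl

end StmtAux
/-- Let `H` be a graph with minimum degree at least `2`, in which every maximal path all
of whose vertices have degree exactly `2` has at most `7` vertices, and no connected
component of which is a cycle all of whose vertices have degree `2` (i.e. every
component contains a vertex of degree `≠ 2`).  If `X` is a feedback vertex set of `H`
and `Y = V(H) \ X`, then `|Y| ≤ 16 · |E(X, Y)|`. -/
theorem stmt_12 {V : Type*} [Fintype V] [DecidableEq V] (H : SimpleGraph V)
    [DecidableRel H.Adj]
    (hmin : ∀ v : V, 2 ≤ H.degree v)
    -- every maximal degree-2 path has at most 7 vertices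
    (hpath : ∀ (u v : V) (p : H.Walk u v), p.IsPath →
      (∀ x ∈ p.support, H.degree x = 2) →
      (¬ ∃ w : V, H.Adj w u ∧ w ∉ p.support ∧ H.degree w = 2) →
      (¬ ∃ w : V, H.Adj v w ∧ w ∉ p.support ∧ H.degree w = 2) →
      p.support.length ≤ 7)
    -- no connected component is a cycle of degree-2 vertices
    (hnocyc : ∀ v : V, ∃ u : V, H.Reachable v u ∧ H.degree u ≠ 2)
    -- `X` is a feedback vertex set
    (X : Set V) (hX : (H.induce Xᶜ).IsAcyclic) :
    Set.ncard Xᶜ ≤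
      16 * Set.ncard {e ∈ H.edgeSet | ∃ x ∈ X, ∃ y ∈ Xᶜ, e = s(x, y)} := by
  classical
  set Yf : Finset V := Finset.univ.filter (fun v => v ∈ Xᶜ) with hYfdef
  have hmemYf : ∀ v, v ∈ Yf ↔ v ∈ Xᶜ := fun v => by simp [hYfdef]
  set m := ∑ y ∈ Yf, #(H.neighborFinset y \ Yf) with hmdef
  -- forest bound
  have hforest : ∑ y ∈ Yf, #(H.neighborFinset y ∩ Yf) ≤ 2 * #Yf := by
    refine StmtAux.sum_card_nbr_le Yf ?_
    intro u c hc hsub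
    exact StmtAux.cycle_not_subset hX c hc (fun x hx => (hmemYf x).mp (hsub x hx))
  set D2 := Yf.filter (fun y => H.degree y = 2 ∧ H.neighborFinset y ⊆ Yf) with hD2def
  set S := Yf \ D2 with hSdef
  have hD2Y : D2 ⊆ Yf := Finset.filter_subset _ _
  have hYsplit : #Yf = #S + #D2 := by
    rw [hSdef, Finset.card_sdiff_of_subset hD2Y]
    have := Finset.card_le_card hD2Y
    omega
  -- |S| ≤ 2m
  have hSm : #S ≤ 2 * m := by
    set C := Yf.filter (fun y => ¬ H.neighborFinset y ⊆ Yf) with hCdef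
    set D3 := Yf.filter (fun y => H.degree y ≠ 2) with hD3def
    have hSsub : S ⊆ D3 ∪ C := by
      intro y hy
      rw [hSdef, Finset.mem_sdiff] at hy
      obtain ⟨hyY, hynot⟩ := hy
      rw [Finset.mem_union]
      by_cases h1 : H.degree y = 2
      · exact Or.inr (Finset.mem_filter.mpr ⟨hyY, fun hsub =>
          hynot (Finset.mem_filter.mpr ⟨hyY, h1, hsub⟩)⟩)
      · exact Or.inl (Finset.mem_filter.mpr ⟨hyY, h1⟩)
    have hCm : #C ≤ m := by
      have h1 : ∀ y ∈ C, 1 ≤ #(H.neighborFinset y \ Yf) := by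
        intro y hy
        rw [hCdef, Finset.mem_filter] at hy
        rw [Nat.one_le_iff_ne_zero, Ne, Finset.card_eq_zero,
          Finset.sdiff_eq_empty_iff_subset]
        exact hy.2
      calc #C = ∑ _y ∈ C, 1 := by simp
        _ ≤ ∑ y ∈ C, #(H.neighborFinset y \ Yf) := Finset.sum_le_sum h1
        _ ≤ m := Finset.sum_le_sum_of_subset (Finset.filter_subset _ _)
    have hD3m : #D3 ≤ m := by
      have hlower : ∀ y ∈ Yf, 2 + (if H.degree y ≠ 2 then 1 else 0) ≤ H.degree y := by
        intro y _
        have := hmin y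
        by_cases h : H.degree y = 2 <;> simp [h] <;> omega
      have hsum1 : 2 * #Yf + #D3 ≤ ∑ y ∈ Yf, H.degree y := by
        have heq : ∑ y ∈ Yf, (2 + if H.degree y ≠ 2 then 1 else 0) = 2 * #Yf + #D3 := by
          rw [Finset.sum_add_distrib, Finset.sum_const, ← Finset.card_filter, hD3def]
          simp [two_mul, mul_comm]
        rw [← heq]
        exact Finset.sum_le_sum hlower
      have hsum2 : ∑ y ∈ Yf, H.degree y =
          ∑ y ∈ Yf, #(H.neighborFinset y ∩ Yf) + m := by
        rw [hmdef, ← Finset.sum_add_distrib]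
        refine Finset.sum_congr rfl fun y _ => ?_
        exact (Finset.card_inter_add_card_sdiff _ _).symm
      omega
    calc #S ≤ #(D3 ∪ C) := Finset.card_le_card hSsub
      _ ≤ #D3 + #C := Finset.card_union_le _ _
      _ ≤ 2 * m := by omega
  -- component bound
  have hcomp : 2 * #D2 ≤ 7 * ∑ y ∈ D2, #(H.neighborFinset y ∩ S) := by
    refine StmtAux.comp_bound H hpath hnocyc D2 S ?_ ?_ ?_
    · intro y hy
      rw [hSdef, Finset.mem_sdiff]
      exact fun h => h.2 hy
    · intro y hy
      exact ((Finset.mem_filter.mp hy).2).1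
    · intro y hy
      have hsub := ((Finset.mem_filter.mp hy).2).2
      intro w hw
      have hwY : w ∈ Yf := hsub hw
      by_cases hwD : w ∈ D2
      · exact Finset.mem_union_left _ hwD
      · exact Finset.mem_union_right _ (Finset.mem_sdiff.mpr ⟨hwY, hwD⟩)
  -- P ≤ 2|S|
  have hP : ∑ y ∈ D2, #(H.neighborFinset y ∩ S) ≤ 2 * #S := by
    have hswap : ∑ y ∈ D2, #(H.neighborFinset y ∩ S) =
        ∑ s ∈ S, #(H.neighborFinset s ∩ D2) := by
      rw [StmtAux.sum_nbr_eq_card, StmtAux.sum_nbr_eq_card, StmtAux.card_pairs_symm]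
    have h1 : ∑ s ∈ S, #(H.neighborFinset s ∩ D2) ≤ ∑ s ∈ S, #(H.neighborFinset s ∩ Yf) :=
      Finset.sum_le_sum fun s _ =>
        Finset.card_le_card (Finset.inter_subset_inter Finset.Subset.rfl hD2Y)
    have hD2f : ∑ y ∈ D2, #(H.neighborFinset y ∩ Yf) = 2 * #D2 := by
      have : ∀ y ∈ D2, #(H.neighborFinset y ∩ Yf) = 2 := by
        intro y hy
        obtain ⟨hyY, hdeg, hsub⟩ := Finset.mem_filter.mp hy
        rw [Finset.inter_eq_left.mpr hsub]
        exact hdeg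
      rw [Finset.sum_congr rfl this, Finset.sum_const, smul_eq_mul, mul_comm]
    have hsplitf : ∑ y ∈ S, #(H.neighborFinset y ∩ Yf) +
        ∑ y ∈ D2, #(H.neighborFinset y ∩ Yf) = ∑ y ∈ Yf, #(H.neighborFinset y ∩ Yf) :=
      Finset.sum_sdiff hD2Y
    omega
  -- conclude |Yf| ≤ 16 m
  have hYm : #Yf ≤ 16 * m := by omega
  -- identify the two set cardinalities
  have hXc : Set.ncard Xᶜ = #Yf := by
    rw [Set.ncard_eq_toFinset_card']
    congr 1
    ext v
    simp [hmemYf]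
  have hmpairs : m = #((Yf ×ˢ (Finset.univ \ Yf)).filter (fun p => H.Adj p.1 p.2)) := by
    rw [hmdef, ← StmtAux.sum_nbr_eq_card]
    refine Finset.sum_congr rfl fun y _ => ?_
    congr 1
    ext w
    simp [Finset.mem_sdiff]
  have hcut : Set.ncard {e ∈ H.edgeSet | ∃ x ∈ X, ∃ y ∈ Xᶜ, e = s(x, y)} = m := by
    rw [Set.ncard_eq_toFinset_card', hmpairs]
    refine (Finset.card_bij (fun p _ => s(p.2, p.1)) ?_ ?_ ?_).symm
    · intro p hp
      rw [Finset.mem_filter, Finset.mem_product] at hp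
      obtain ⟨⟨hp1, hp2⟩, hadj⟩ := hp
      rw [Set.mem_toFinset]
      refine ⟨hadj.symm, p.2, ?_, p.1, (hmemYf p.1).mp hp1, rfl⟩
      have : p.2 ∉ Yf := (Finset.mem_sdiff.mp hp2).2
      rw [hmemYf] at this
      simpa using this
    · intro p hp q hq heq
      rw [Finset.mem_filter, Finset.mem_product] at hp hq
      have hp1 : p.1 ∈ (Xᶜ : Set V) := (hmemYf p.1).mp hp.1.1
      have hq1 : q.1 ∈ (Xᶜ : Set V) := (hmemYf q.1).mp hq.1.1
      have hp2 : p.2 ∈ X := by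
        have := (Finset.mem_sdiff.mp hp.1.2).2
        rw [hmemYf] at this
        simpa using this
      have hq2 : q.2 ∈ X := by
        have := (Finset.mem_sdiff.mp hq.1.2).2
        rw [hmemYf] at this
        simpa using this
      rw [Sym2.eq_iff] at heq
      rcases heq with ⟨h1, h2⟩ | ⟨h1, h2⟩
      · exact Prod.ext h2 h1
      · exact absurd (h1 ▸ hq1) (by simpa using hp2)
    · intro e he
      rw [Set.mem_toFinset] at he
      obtain ⟨hee, x, hx, y, hy, rfl⟩ := he
      refine ⟨(y, x), ?_, rfl⟩
      rw [Finset.mem_filter, Finset.mem_product]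
      refine ⟨⟨(hmemYf y).mpr hy, ?_⟩, (H.mem_edgeSet.mp hee).symm⟩
      rw [Finset.mem_sdiff]
      refine ⟨Finset.mem_univ x, fun hxY => ?_⟩
      rw [hmemYf] at hxY
      exact hxY hx
  rw [hXc, hcut]
  exact hYm.trans (by omega)
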